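/- arXiv:1901.09722 — 6 statements merged into one kernel-verified Lean document; each statement's English description precedes it below -/
import Mathlib

section
/- Let T ⊆ ℝ and F : T → c(M). Then V⁺(F,T) < +∞ if and only if there exists a nondecreasing bounded function φ : T → ℝ such that e(F(s),F(t)) ≤ φ(t) − φ(s) for all s,t ∈ T with s ≤ t; moreover in that case V⁺(F,T) ≤ V(φ,T), the Jordan variation of φ. -/
open Set Metric EMetric Filter
open scoped ENNReal Pointwise

noncomputable def exc {M : Type*} [MetricSpace M] (X Y : Set M) : ℝ≥0∞ :=
  ⨆ x ∈ X, EMetric.infEdist x Y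

noncomputable def varBy {M : Type*} [MetricSpace M]
    (D : Set M → Set M → ℝ≥0∞) (F : ℝ → Set M) (T : Set ℝ) : ℝ≥0∞ :=
  ⨆ p : {p : ℕ × (ℕ → ℝ) // Monotone p.2 ∧ ∀ i, p.2 i ∈ T},
    ∑ i ∈ Finset.range p.1.1, D (F (p.1.2 i)) (F (p.1.2 (i + 1)))

noncomputable def varPlus {M : Type*} [MetricSpace M] (F : ℝ → Set M) (T : Set ℝ) : ℝ≥0∞ :=
  varBy exc F T

noncomputable def varMinus {M : Type*} [MetricSpace M] (F : ℝ → Set M) (T : Set ℝ) : ℝ≥0∞ :=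
  varBy (fun X Y => exc Y X) F T

noncomputable def varH {M : Type*} [MetricSpace M] (F : ℝ → Set M) (T : Set ℝ) : ℝ≥0∞ :=
  varBy EMetric.hausdorffEdist F T

lemma varBy_mono {M : Type*} [MetricSpace M] (D : Set M → Set M → ℝ≥0∞)
    (F : ℝ → Set M) {T₁ T₂ : Set ℝ} (h : T₁ ⊆ T₂) :
    varBy D F T₁ ≤ varBy D F T₂ := by
  refine iSup_le fun p => ?_
  exact le_iSup_of_le ⟨p.1, p.2.1, fun i => h (p.2.2 i)⟩ le_rfl

lemma exc_key {M : Type*} [MetricSpace M] (F : ℝ → Set M) (T : Set ℝ) {s t : ℝ}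
    (hs : s ∈ T) (ht : t ∈ T) (hst : s ≤ t) :
    exc (F s) (F t) + varPlus F (T ∩ Iic s) ≤ varPlus F (T ∩ Iic t) := by
  have hne : Nonempty {p : ℕ × (ℕ → ℝ) // Monotone p.2 ∧ ∀ i, p.2 i ∈ T ∩ Iic s} :=
    ⟨⟨(0, fun _ => s), monotone_const, fun _ => ⟨hs, Set.self_mem_Iic⟩⟩⟩
  rw [varPlus, varBy, ENNReal.add_iSup]
  refine iSup_le ?_
  rintro ⟨⟨n, u⟩, hu, humem⟩
  set v : ℕ → ℝ := fun i => if i ≤ n then u i else if i = n + 1 then s else t with hv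
  have hvmono : Monotone v := by
    apply monotone_nat_of_le_succ
    intro i
    rcases lt_trichotomy i n with hin | rfl | hin
    · simp only [hv, if_pos hin.le, if_pos (Nat.succ_le_of_lt hin)]
      exact hu (Nat.le_succ i)
    · simp only [hv, if_pos le_rfl, if_neg (Nat.lt_irrefl _ ∘ Nat.lt_of_succ_le), if_pos rfl]
      exact (humem i).2
    · have h1 : ¬ i ≤ n := not_le.2 hin
      have h2 : ¬ i + 1 ≤ n := not_le.2 (hin.trans (Nat.lt_succ_self i))
      have h3 : i + 1 ≠ n + 1 := fun h => h1 (by omega)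
      by_cases h4 : i = n + 1
      · simp only [hv, if_neg h1, if_neg h2, if_pos h4, if_neg h3]; exact hst
      · simp only [hv, if_neg h1, if_neg h2, if_neg h4, if_neg h3]
        exact le_rfl
  have hvmem : ∀ i, v i ∈ T ∩ Iic t := by
    intro i
    by_cases h1 : i ≤ n
    · simp only [hv, if_pos h1]
      exact ⟨(humem i).1, (humem i).2.trans hst⟩
    · by_cases h2 : i = n + 1
      · simp only [hv, if_neg h1, if_pos h2]; exact ⟨hs, hst⟩
      · simp only [hv, if_neg h1, if_neg h2]; exact ⟨ht, Set.self_mem_Iic⟩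
  refine le_trans ?_ (le_iSup_of_le ⟨(n + 2, v), hvmono, hvmem⟩ le_rfl)
  simp only
  rw [Finset.sum_range_succ, Finset.sum_range_succ]
  have hvn : v n = u n := by simp [hv]
  have hvn1 : v (n + 1) = s := by simp [hv]
  have hvn2 : v (n + 2) = t := by
    simp only [hv]
    rw [if_neg (by omega), if_neg (by omega)]
  have hsum : ∑ i ∈ Finset.range n, exc (F (v i)) (F (v (i + 1)))
      = ∑ i ∈ Finset.range n, exc (F (u i)) (F (u (i + 1))) := by
    refine Finset.sum_congr rfl fun i hi => ?_
    have hi' := Finset.mem_range.1 hi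
    simp only [hv, if_pos hi'.le, if_pos (Nat.succ_le_of_lt hi')]
  rw [hsum, hvn1, hvn2]
  calc exc (F s) (F t) + ∑ i ∈ Finset.range n, exc (F (u i)) (F (u (i + 1)))
      ≤ (∑ i ∈ Finset.range n, exc (F (u i)) (F (u (i + 1))) + exc (F (v n)) (F s))
        + exc (F s) (F t) := by
        rw [add_comm]
        exact add_le_add le_self_add le_rfl
    _ = _ := rfl

/-- Characterization of finiteness of V⁺ via a nondecreasing bounded majorant φ,
with the bound V⁺(F,T) ≤ V(φ,T). -/
theorem varPlus_finite_iff_exists_majorant {M : Type*} [MetricSpace M]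
    (T : Set ℝ) (F : ℝ → Set M)
    (hF : ∀ t ∈ T, (F t).Nonempty ∧ IsCompact (F t)) :
    (varPlus F T < ⊤ ↔
      ∃ φ : ℝ → ℝ, MonotoneOn φ T ∧ BddAbove (φ '' T) ∧ BddBelow (φ '' T) ∧
        ∀ s ∈ T, ∀ t ∈ T, s ≤ t → exc (F s) (F t) ≤ ENNReal.ofReal (φ t - φ s)) ∧
    (∀ φ : ℝ → ℝ, MonotoneOn φ T → BddAbove (φ '' T) → BddBelow (φ '' T) →
      (∀ s ∈ T, ∀ t ∈ T, s ≤ t → exc (F s) (F t) ≤ ENNReal.ofReal (φ t - φ s)) →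
      varPlus F T ≤ eVariationOn φ T) := by
  constructor
  · constructor
    · intro hfin
      have hTop : varPlus F T ≠ ⊤ := hfin.ne
      set φ : ℝ → ℝ := fun x => (varPlus F (T ∩ Iic x)).toReal with hφ
      have hsub : ∀ x : ℝ, varPlus F (T ∩ Iic x) ≤ varPlus F T :=
        fun x => varBy_mono _ _ inter_subset_left
      have hfin' : ∀ x : ℝ, varPlus F (T ∩ Iic x) ≠ ⊤ :=
        fun x => ((hsub x).trans_lt hfin).ne
      have hmono : MonotoneOn φ T := by
        intro a _ b _ hab
        exact ENNReal.toReal_mono (hfin' b)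
          (varBy_mono _ _ (inter_subset_inter_right _ (Iic_subset_Iic.2 hab)))
      refine ⟨φ, hmono, ?_, ?_, ?_⟩
      · refine ⟨(varPlus F T).toReal, ?_⟩
        rintro - ⟨x, -, rfl⟩
        exact ENNReal.toReal_mono hTop (hsub x)
      · exact ⟨0, by rintro - ⟨x, -, rfl⟩; exact ENNReal.toReal_nonneg⟩
      · intro s hs t ht hst
        have key := exc_key F T hs ht hst
        have hab : varPlus F (T ∩ Iic s) ≤ varPlus F (T ∩ Iic t) :=
          varBy_mono _ _ (inter_subset_inter_right _ (Iic_subset_Iic.2 hst))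
        have h1 : exc (F s) (F t) ≤ varPlus F (T ∩ Iic t) - varPlus F (T ∩ Iic s) :=
          ENNReal.le_sub_of_add_le_right (hfin' s) key
        have h2 : ENNReal.ofReal (φ t - φ s)
            = varPlus F (T ∩ Iic t) - varPlus F (T ∩ Iic s) := by
          rw [hφ]
          simp only
          rw [← ENNReal.toReal_sub_of_le hab (hfin' t), ENNReal.ofReal_toReal]
          exact ((tsub_le_self).trans_lt (hfin' t).lt_top).ne
        rw [h2]
        exact h1
    · rintro ⟨φ, hmono, ⟨B, hB⟩, ⟨A, hA⟩, hineq⟩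
      have : varPlus F T ≤ ENNReal.ofReal (B - A) := by
        refine iSup_le ?_
        rintro ⟨⟨n, u⟩, hu, humem⟩
        simp only
        calc ∑ i ∈ Finset.range n, exc (F (u i)) (F (u (i + 1)))
            ≤ ∑ i ∈ Finset.range n, ENNReal.ofReal (φ (u (i + 1)) - φ (u i)) := by
              refine Finset.sum_le_sum fun i _ => ?_
              exact hineq _ (humem i) _ (humem (i + 1)) (hu (Nat.le_succ i))
          _ = ENNReal.ofReal (∑ i ∈ Finset.range n, (φ (u (i + 1)) - φ (u i))) := by
              rw [ENNReal.ofReal_sum_of_nonneg]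
              intro i _
              exact sub_nonneg.2 (hmono (humem i) (humem (i + 1)) (hu (Nat.le_succ i)))
          _ = ENNReal.ofReal (φ (u n) - φ (u 0)) := by
              rw [Finset.sum_range_sub (fun i => φ (u i))]
          _ ≤ ENNReal.ofReal (B - A) := by
              apply ENNReal.ofReal_le_ofReal
              have h1 : φ (u n) ≤ B := hB ⟨u n, humem n, rfl⟩
              have h2 : A ≤ φ (u 0) := hA ⟨u 0, humem 0, rfl⟩
              linarith
      exact this.trans_lt ENNReal.ofReal_lt_top
  · intro φ hmono _ _ hineq
    refine iSup_le ?_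
    rintro ⟨⟨n, u⟩, hu, humem⟩
    simp only
    calc ∑ i ∈ Finset.range n, exc (F (u i)) (F (u (i + 1)))
        ≤ ∑ i ∈ Finset.range n, edist (φ (u (i + 1))) (φ (u i)) := by
          refine Finset.sum_le_sum fun i _ => ?_
          rw [edist_dist, Real.dist_eq, abs_of_nonneg
            (sub_nonneg.2 (hmono (humem i) (humem (i + 1)) (hu (Nat.le_succ i))))]
          exact hineq _ (humem i) _ (humem (i + 1)) (hu (Nat.le_succ i))
      _ ≤ eVariationOn φ T := eVariationOn.sum_le (f := φ) (n := n) hu humem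
end

section
/- The right directional variation is lower semicontinuous under pointwise convergence: if F_n : T → c(M) converge pointwise on T to F in the Hausdorff metric (d_H(F_n(t),F(t)) → 0 for all t ∈ T), then V⁺(F,T) ≤ liminf_{n→∞} V⁺(F_n,T). -/
open Set Metric EMetric Filter
open scoped ENNReal Pointwise

lemma exc_aux {M : Type*} [MetricSpace M] (X X' Y Y' : Set M) :
    (⨆ x ∈ X, EMetric.infEdist x Y) ≤
      hausdorffEdist X X' + ((⨆ x ∈ X', EMetric.infEdist x Y') + hausdorffEdist Y' Y) := by
  refine iSup₂_le fun x hx => ?_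
  set C := ⨆ y ∈ X', EMetric.infEdist y Y' with hC
  have h1 : EMetric.infEdist x Y ≤ EMetric.infEdist x Y' + hausdorffEdist Y' Y :=
    EMetric.infEdist_le_infEdist_add_hausdorffEdist
  have heq : EMetric.infEdist x X' + C = ⨅ y : X', (edist x ↑y + C) := by
    rw [EMetric.infEdist, Metric.infEDist, iInf_subtype', ENNReal.iInf_add]
  have h2 : EMetric.infEdist x Y' ≤ EMetric.infEdist x X' + C := by
    rw [heq]
    refine le_iInf fun ⟨y, hy⟩ => ?_
    calc EMetric.infEdist x Y' ≤ edist x y + EMetric.infEdist y Y' :=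
          EMetric.infEdist_le_edist_add_infEdist
      _ ≤ edist x y + C :=
          add_le_add_right (le_iSup₂ (f := fun z _ => EMetric.infEdist z Y') y hy) _
  have h3 : EMetric.infEdist x X' ≤ hausdorffEdist X X' :=
    EMetric.infEdist_le_hausdorffEdist_of_mem hx
  calc EMetric.infEdist x Y ≤ EMetric.infEdist x Y' + hausdorffEdist Y' Y := h1
    _ ≤ (EMetric.infEdist x X' + C) + hausdorffEdist Y' Y := add_le_add_left h2 _
    _ ≤ (hausdorffEdist X X' + C) + hausdorffEdist Y' Y :=
        add_le_add_left (add_le_add_left h3 _) _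
    _ = _ := by ring

/-- Lower semicontinuity of V⁺ under pointwise convergence in the Hausdorff metric. -/
theorem varPlus_lowerSemicontinuous {M : Type*} [MetricSpace M]
    (T : Set ℝ) (F : ℕ → ℝ → Set M) (G : ℝ → Set M)
    (hF : ∀ n, ∀ t ∈ T, ((F n t).Nonempty ∧ IsCompact (F n t)))
    (hG : ∀ t ∈ T, (G t).Nonempty ∧ IsCompact (G t))
    (hconv : ∀ t ∈ T,
      Filter.Tendsto (fun n => EMetric.hausdorffEdist (F n t) (G t)) Filter.atTop (nhds 0)) :
    varPlus G T ≤ Filter.liminf (fun n => varPlus (F n) T) Filter.atTop := by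
  set L := Filter.liminf (fun n => varPlus (F n) T) Filter.atTop with hL
  refine iSup_le fun p => ?_
  obtain ⟨⟨m, s⟩, hmono, hmem⟩ := p
  simp only
  set S := ∑ i ∈ Finset.range m, exc (G (s i)) (G (s (i + 1))) with hS
  -- the error terms
  set ε : ℕ → ℝ≥0∞ := fun n => ∑ i ∈ Finset.range m,
    (EMetric.hausdorffEdist (G (s i)) (F n (s i)) +
      EMetric.hausdorffEdist (F n (s (i + 1))) (G (s (i + 1)))) with hε
  have hεto : Filter.Tendsto ε Filter.atTop (nhds 0) := by
    have : Filter.Tendsto (fun n => ∑ i ∈ Finset.range m,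
        ((fun n => EMetric.hausdorffEdist (G (s i)) (F n (s i)) +
          EMetric.hausdorffEdist (F n (s (i + 1))) (G (s (i + 1)))) n)) Filter.atTop
        (nhds (∑ i ∈ Finset.range m, 0)) := by
      refine tendsto_finset_sum _ fun i _ => ?_
      have h1 : Filter.Tendsto (fun n => EMetric.hausdorffEdist (G (s i)) (F n (s i)))
          Filter.atTop (nhds 0) := by
        exact (hconv (s i) (hmem i)).congr fun n => Metric.hausdorffEDist_comm
      have h2 := hconv (s (i + 1)) (hmem (i + 1))
      simpa using h1.add h2
    simpa using this
  -- the main bound for each n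
  have hbound : ∀ n, S ≤ varPlus (F n) T + ε n := by
    intro n
    have step : ∀ i, exc (G (s i)) (G (s (i + 1))) ≤
        (EMetric.hausdorffEdist (G (s i)) (F n (s i)) +
          EMetric.hausdorffEdist (F n (s (i + 1))) (G (s (i + 1)))) +
        exc (F n (s i)) (F n (s (i + 1))) := by
      intro i
      have := exc_aux (G (s i)) (F n (s i)) (G (s (i + 1))) (F n (s (i + 1)))
      calc exc (G (s i)) (G (s (i + 1)))
          ≤ EMetric.hausdorffEdist (G (s i)) (F n (s i)) +
            (exc (F n (s i)) (F n (s (i + 1))) +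
              EMetric.hausdorffEdist (F n (s (i + 1))) (G (s (i + 1)))) := this
        _ = _ := by simp only [exc]; ring
    have h4 : S ≤ ∑ i ∈ Finset.range m,
        ((EMetric.hausdorffEdist (G (s i)) (F n (s i)) +
          EMetric.hausdorffEdist (F n (s (i + 1))) (G (s (i + 1)))) +
        exc (F n (s i)) (F n (s (i + 1)))) :=
      Finset.sum_le_sum fun i _ => step i
    rw [Finset.sum_add_distrib] at h4
    refine h4.trans ?_
    have hv : ∑ i ∈ Finset.range m, exc (F n (s i)) (F n (s (i + 1))) ≤ varPlus (F n) T :=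
      le_iSup (fun q : {q : ℕ × (ℕ → ℝ) // Monotone q.2 ∧ ∀ i, q.2 i ∈ T} =>
        ∑ i ∈ Finset.range q.1.1, exc (F n (q.1.2 i)) (F n (q.1.2 (i + 1))))
        ⟨⟨m, s⟩, hmono, hmem⟩
    exact (add_le_add_right hv _).trans (le_of_eq (add_comm _ _))
  -- conclude
  refine ENNReal.le_of_forall_pos_le_add fun δ hδ _ => ?_
  have hδ' : (0 : ℝ≥0∞) < δ := ENNReal.coe_pos.2 hδ
  have hev : ∀ᶠ n in Filter.atTop, ε n < δ := hεto.eventually_lt_const hδ'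
  have hev2 : ∀ᶠ n in Filter.atTop, S - δ ≤ varPlus (F n) T := by
    filter_upwards [hev] with n hn
    rw [tsub_le_iff_right]
    exact (hbound n).trans (add_le_add_right hn.le (varPlus (F n) T))
  have : S - δ ≤ L := Filter.le_liminf_of_le (by isBoundedDefault) hev2
  rwa [tsub_le_iff_right] at this
end

section
/- Let F : T → c(M) with V⁺(F,T) < +∞, and let t ∈ T be a left limit point of T (i.e., T ∩ (t−ε,t) ≠ ∅ for every ε > 0). Then v⁺(t) = v⁺(t−0) + limsup_{T ∋ s → t−0} e(F(s),F(t)), where v⁺(t) := V⁺(F, T∩(-∞,t]) and v⁺(t−0) is its left limit along T. -/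
open Set Metric EMetric Filter
open scoped ENNReal Pointwise

lemma exc_self {M : Type*} [MetricSpace M] (X : Set M) : exc X X = 0 := by
  refine le_antisymm (iSup₂_le fun x hx => ?_) (zero_le)
  exact (EMetric.infEdist_zero_of_mem hx).le

lemma exc_triangle {M : Type*} [MetricSpace M] (X Y Z : Set M) :
    exc X Z ≤ exc X Y + exc Y Z := by
  refine iSup₂_le fun x hx => ?_
  have h1 : EMetric.infEdist x Z ≤ EMetric.infEdist x Y + exc Y Z := by
    conv_rhs => rw [EMetric.infEdist, Metric.infEDist]
    simp_rw [ENNReal.iInf_add]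
    refine le_iInf₂ fun y hy => ?_
    refine le_trans (infEdist_le_edist_add_infEdist (y := y)) ?_
    gcongr
    exact le_iSup₂_of_le y hy le_rfl
  refine h1.trans ?_
  gcongr
  exact le_iSup₂_of_le x hx le_rfl

lemma varBy_mono_set {M : Type*} [MetricSpace M]
    (D : Set M → Set M → ℝ≥0∞) (F : ℝ → Set M) {T T' : Set ℝ} (h : T ⊆ T') :
    varBy D F T ≤ varBy D F T' := by
  refine iSup_le fun p => ?_
  exact le_iSup_of_le ⟨p.1, p.2.1, fun i => h (p.2.2 i)⟩ le_rfl

lemma sum_le_varPlus {M : Type*} [MetricSpace M] {F : ℝ → Set M} {T : Set ℝ}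
    {f : ℕ → ℝ} {m : ℕ} (hf : Monotone f) (hmem : ∀ i, f i ∈ T) :
    ∑ i ∈ Finset.range m, exc (F (f i)) (F (f (i + 1)))
      ≤ varPlus F (T ∩ Set.Iic (f m)) := by
  have hg : Monotone fun i => f (min i m) := fun a b hab => hf (min_le_min hab le_rfl)
  have hgm : ∀ i, f (min i m) ∈ T ∩ Set.Iic (f m) :=
    fun i => ⟨hmem _, hf (min_le_right i m)⟩
  refine le_trans ?_ (le_iSup _ (⟨(m, fun i => f (min i m)), hg, hgm⟩ :
    {p : ℕ × (ℕ → ℝ) // Monotone p.2 ∧ ∀ i, p.2 i ∈ T ∩ Set.Iic (f m)}))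
  refine le_of_eq (Finset.sum_congr rfl fun i hi => ?_)
  simp only [Finset.mem_range] at hi
  show exc (F (f i)) (F (f (i + 1))) = exc (F (f (min i m))) (F (f (min (i + 1) m)))
  rw [min_eq_left hi.le, min_eq_left hi]

lemma varPlus_add_exc_le {M : Type*} [MetricSpace M] {F : ℝ → Set M} {T : Set ℝ}
    {s s' : ℝ} (hs : s ∈ T) (hs' : s' ∈ T) (hss : s ≤ s') :
    varPlus F (T ∩ Set.Iic s) + exc (F s) (F s') ≤ varPlus F (T ∩ Set.Iic s') := by
  haveI : Nonempty {p : ℕ × (ℕ → ℝ) // Monotone p.2 ∧ ∀ i, p.2 i ∈ T ∩ Set.Iic s} :=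
    ⟨⟨(0, fun _ => s), monotone_const, fun _ => (⟨hs, Set.self_mem_Iic⟩ : s ∈ T ∩ Set.Iic s)⟩⟩
  rw [varPlus, varBy, ENNReal.iSup_add]
  refine iSup_le fun p => ?_
  obtain ⟨⟨m, f⟩, hmono, hmem⟩ := p
  simp only
  set g : ℕ → ℝ := fun i => if i ≤ m then f i else if i = m + 1 then s else s' with hgdef
  have hgmono : Monotone g := by
    refine monotone_nat_of_le_succ fun i => ?_
    rcases lt_trichotomy i m with h | h | h
    · simp only [hgdef, if_pos h.le, if_pos (Nat.succ_le_of_lt h)]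
      exact hmono (Nat.le_succ i)
    · simp only [hgdef, if_pos h.le, if_neg (show ¬ i + 1 ≤ m by omega),
        if_pos (show i + 1 = m + 1 by omega)]
      exact (hmem i).2
    · rcases eq_or_lt_of_le (Nat.succ_le_of_lt h) with h' | h'
      · simp only [hgdef, if_neg (show ¬ i ≤ m by omega), if_neg (show ¬ i + 1 ≤ m by omega),
          if_pos (show i = m + 1 by omega), if_neg (show ¬ i + 1 = m + 1 by omega)]
        exact hss
      · simp only [hgdef, if_neg (show ¬ i ≤ m by omega), if_neg (show ¬ i + 1 ≤ m by omega),
          if_neg (show ¬ i = m + 1 by omega), if_neg (show ¬ i + 1 = m + 1 by omega)]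
        exact le_rfl
  have hgmem : ∀ i, g i ∈ T := by
    intro i
    rcases le_or_gt i m with h | h
    · simpa [hgdef, if_pos h] using (hmem i).1
    · rcases eq_or_ne i (m + 1) with h' | h'
      · simp [hgdef, if_neg (by omega : ¬ i ≤ m), h', hs]
      · simp [hgdef, if_neg (by omega : ¬ i ≤ m), h', hs']
  have hgend : g (m + 2) = s' := by simp [hgdef]
  have key := sum_le_varPlus (F := F) (T := T) (f := g) (m := m + 2) hgmono hgmem
  rw [hgend] at key
  refine le_trans ?_ key
  rw [Finset.sum_range_succ, Finset.sum_range_succ]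
  have e1 : ∀ i ∈ Finset.range m, exc (F (g i)) (F (g (i + 1))) = exc (F (f i)) (F (f (i + 1))) := by
    intro i hi
    simp only [Finset.mem_range] at hi
    rw [show g i = f i from if_pos hi.le, show g (i + 1) = f (i + 1) from if_pos hi]
  have e2 : g (m + 1) = s := by simp [hgdef]
  have e3 : g m = f m := if_pos le_rfl
  rw [Finset.sum_congr rfl e1, e2, e3, hgend]
  calc (∑ i ∈ Finset.range m, exc (F (f i)) (F (f (i + 1)))) + exc (F s) (F s')
      ≤ (∑ i ∈ Finset.range m, exc (F (f i)) (F (f (i + 1)))) +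
        (exc (F (f m)) (F s) + exc (F s) (F s')) := by gcongr; exact le_add_self
    _ = _ := by ring

/-- Left jump formula: v⁺(t) = v⁺(t−0) + limsup_{T ∋ s → t−0} e(F(s),F(t)). -/
theorem varPlus_left_jump {M : Type*} [MetricSpace M]
    (T : Set ℝ) (F : ℝ → Set M)
    (hF : ∀ t ∈ T, (F t).Nonempty ∧ IsCompact (F t))
    (hV : varPlus F T < ⊤) (t : ℝ) (ht : t ∈ T)
    (hleft : ∀ ε > 0, (T ∩ Set.Ioo (t - ε) t).Nonempty) :
    varPlus F (T ∩ Set.Iic t) =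
      Filter.limsup (fun s => varPlus F (T ∩ Set.Iic s)) (nhdsWithin t (T ∩ Set.Iio t)) +
      Filter.limsup (fun s => exc (F s) (F t)) (nhdsWithin t (T ∩ Set.Iio t)) := by
  set v : ℝ → ℝ≥0∞ := fun s => varPlus F (T ∩ Set.Iic s) with hv
  set l := nhdsWithin t (T ∩ Set.Iio t) with hl
  set L := Filter.limsup v l with hL
  set J := Filter.limsup (fun s => exc (F s) (F t)) l with hJ
  haveI hne : l.NeBot := by
    rw [hl, ← mem_closure_iff_nhdsWithin_neBot]
    rw [Metric.mem_closure_iff]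
    intro ε hε
    obtain ⟨b, hbT, hb1, hb2⟩ := hleft ε hε
    exact ⟨b, ⟨hbT, hb2⟩, by rw [Real.dist_eq]; rw [abs_lt]; constructor <;> linarith⟩
  have hvmono : ∀ a b : ℝ, a ≤ b → v a ≤ v b := fun a b hab =>
    varBy_mono_set _ _ (inter_subset_inter_right _ (Set.Iic_subset_Iic.2 hab))
  have hvfin : ∀ s, v s ≠ ⊤ := fun s =>
    ((varBy_mono_set _ _ Set.inter_subset_left).trans_lt hV).ne
  -- eventual membership / lower bounds
  have hevmem : ∀ᶠ s in l, s ∈ T ∩ Set.Iio t := eventually_mem_nhdsWithin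
  have hevge : ∀ s₀ : ℝ, s₀ < t → ∀ᶠ s in l, s₀ < s := fun s₀ h =>
    (eventually_gt_nhds h).filter_mono nhdsWithin_le_nhds
  -- each v s' (s' < t in T) is ≤ L
  have hvleL : ∀ s' ∈ T ∩ Set.Iio t, v s' ≤ L := by
    intro s' hs'
    have hev : ∀ᶠ s in l, v s' ≤ v s :=
      (hevge s' hs'.2).mono fun x hx => hvmono _ _ hx.le
    exact le_trans (Filter.le_liminf_of_le (by isBoundedDefault) hev)
      (Filter.liminf_le_limsup)
  have key2 : ∀ s' ∈ T ∩ Set.Iio t, v s' + exc (F s') (F t) ≤ v t := fun s' hs' =>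
    varPlus_add_exc_le hs'.1 ht hs'.2.le
  show v t = L + J
  refine le_antisymm ?_ ?_
  · -- v t ≤ L + J
    refine le_of_forall_lt_imp_le_of_dense fun (a : ℝ≥0∞) (ha : a < v t) => ?_
    have ha2 : a < varPlus F (T ∩ Set.Iic t) := ha
    rw [varPlus, varBy, lt_iSup_iff] at ha2
    obtain ⟨⟨⟨m, f⟩, hmono, hmem⟩, hap⟩ := ha2
    simp only at hap
    -- find s₀ ∈ T ∩ Iio t such that eventually a ≤ v s + exc (F s) (F t)
    have main : ∀ᶠ s in l, a ≤ L + exc (F s) (F t) := by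
      have hfmle : f m ≤ t := Set.mem_Iic.mp (hmem m).2
      rcases lt_or_eq_of_le hfmle with hfm | hfm
      · -- all partition points below t
        have hsum : a ≤ v (f m) := by
          refine le_trans hap.le ?_
          exact sum_le_varPlus hmono (fun i => (hmem i).1)
        filter_upwards [hevmem] with s hs
        exact le_trans hsum (le_trans (hvleL _ ⟨(hmem m).1, hfm⟩) le_self_add)
      · -- f m = t : find first index hitting t
        have hex : ∃ k, f k = t := ⟨m, hfm⟩
        rcases Nat.eq_zero_or_pos (Nat.find hex) with hk0 | hkpos
        · -- all points equal t, sum is 0, contradiction with a < sum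
          exfalso
          have hf0 : f 0 = t := hk0 ▸ Nat.find_spec hex
          have hall : ∀ i, f i = t := fun i =>
            le_antisymm (hmem i).2 (hf0 ▸ hmono (Nat.zero_le i))
          have : (∑ i ∈ Finset.range m, exc (F (f i)) (F (f (i + 1)))) = 0 := by
            refine Finset.sum_eq_zero fun i _ => ?_
            rw [hall i, hall (i + 1), exc_self]
          rw [this] at hap
          exact (not_lt.2 (zero_le)) hap
        · obtain ⟨j, hkj⟩ : ∃ j, Nat.find hex = j + 1 := ⟨Nat.find hex - 1, by omega⟩
          have hfk : f (j + 1) = t := hkj ▸ Nat.find_spec hex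
          have hkm : j + 1 ≤ m := hkj ▸ Nat.find_le hfm
          have hfj : f j < t :=
            lt_of_le_of_ne (hmem j).2 (Nat.find_min hex (by omega))
          have hfjT : f j ∈ T := (hmem j).1
          -- for s ∈ T ∩ Iio t with f j ≤ s : a ≤ v s + exc (F s) (F t)
          filter_upwards [hevmem, hevge (f j) hfj] with s hs hjs
          have hcore : (∑ i ∈ Finset.range m, exc (F (f i)) (F (f (i + 1))))
              ≤ v s + exc (F s) (F t) := by
            -- split sum
            have hsplit : (∑ i ∈ Finset.range m, exc (F (f i)) (F (f (i + 1))))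
                = (∑ i ∈ Finset.range (j + 1), exc (F (f i)) (F (f (i + 1))))
                  + ∑ i ∈ Finset.Ico (j + 1) m, exc (F (f i)) (F (f (i + 1))) := by
              rw [Finset.range_eq_Ico, ← Finset.sum_Ico_consecutive _ (Nat.zero_le (j+1)) hkm, Finset.range_eq_Ico]
            have htail : (∑ i ∈ Finset.Ico (j + 1) m, exc (F (f i)) (F (f (i + 1)))) = 0 := by
              refine Finset.sum_eq_zero fun i hi => ?_
              simp only [Finset.mem_Ico] at hi
              have h1 : f i = t := le_antisymm (hmem i).2 (hfk ▸ hmono hi.1)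
              have h2 : f (i + 1) = t := le_antisymm (hmem (i+1)).2 (hfk ▸ hmono (by omega))
              rw [h1, h2, exc_self]
            rw [hsplit, htail, add_zero, Finset.sum_range_succ, hfk]
            -- bound: Σ_{i<j} + exc (F (f j)) (F s) ≤ v s  and triangle
            set g : ℕ → ℝ := fun i => if i ≤ j then f i else s with hgdef
            have hgmono : Monotone g := by
              refine monotone_nat_of_le_succ fun i => ?_
              rcases lt_trichotomy i j with h | h | h
              · simp only [hgdef, if_pos h.le, if_pos (Nat.succ_le_of_lt h)]
                exact hmono (Nat.le_succ i)
              · simp only [hgdef, if_pos h.le, if_neg (show ¬ i + 1 ≤ j by omega)]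
                rw [h]
                exact hjs.le
              · simp only [hgdef, if_neg (by omega : ¬ i ≤ j), if_neg (by omega : ¬ i + 1 ≤ j),
                  le_refl]
            have hgmem : ∀ i, g i ∈ T := by
              intro i
              rcases le_or_gt i j with h | h
              · simpa [hgdef, if_pos h] using (hmem i).1
              · simpa [hgdef, if_neg (by omega : ¬ i ≤ j)] using hs.1
            have hgend : g (j + 1) = s := by simp [hgdef]
            have hkey := sum_le_varPlus (F := F) (T := T) (f := g) (m := j + 1) hgmono hgmem
            rw [hgend] at hkey
            rw [Finset.sum_range_succ] at hkey
            have e1 : ∀ i ∈ Finset.range j,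
                exc (F (g i)) (F (g (i + 1))) = exc (F (f i)) (F (f (i + 1))) := by
              intro i hi
              simp only [Finset.mem_range] at hi
              rw [show g i = f i from if_pos hi.le, show g (i + 1) = f (i + 1) from if_pos hi]
            rw [Finset.sum_congr rfl e1, show g j = f j from if_pos le_rfl, hgend] at hkey
            calc (∑ i ∈ Finset.range j, exc (F (f i)) (F (f (i + 1)))) + exc (F (f j)) (F t)
                ≤ (∑ i ∈ Finset.range j, exc (F (f i)) (F (f (i + 1))))
                  + (exc (F (f j)) (F s) + exc (F s) (F t)) := by
                  gcongr
                  exact exc_triangle _ _ _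
              _ = ((∑ i ∈ Finset.range j, exc (F (f i)) (F (f (i + 1))))
                  + exc (F (f j)) (F s)) + exc (F s) (F t) := by ring
              _ ≤ v s + exc (F s) (F t) := by gcongr
          refine le_trans hap.le (hcore.trans ?_)
          gcongr
          exact hvleL s hs
    -- from main : a ≤ L + J
    have h1 : ∀ᶠ s in l, a - L ≤ exc (F s) (F t) :=
      main.mono fun s hs => tsub_le_iff_left.2 hs
    have h2 : a - L ≤ J :=
      le_trans (Filter.le_liminf_of_le (by isBoundedDefault) h1) Filter.liminf_le_limsup
    calc a ≤ L + (a - L) := le_add_tsub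
      _ ≤ L + J := by gcongr
  · -- L + J ≤ v t
    obtain ⟨s₀, hs₀T, hs₀1, hs₀2⟩ := hleft 1 one_pos
    have hs₀ : s₀ ∈ T ∩ Set.Iio t := ⟨hs₀T, hs₀2⟩
    have hJle : ∀ s' ∈ T ∩ Set.Iio t, J ≤ v t - v s' := by
      intro s' hs'
      refine Filter.limsup_le_of_le (by isBoundedDefault) ?_
      filter_upwards [hevmem, hevge s' hs'.2] with s hsmem hss'
      have h1 : v s' + exc (F s) (F t) ≤ v t :=
        le_trans (by gcongr; exact hvmono _ _ hss'.le) (key2 s hsmem)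
      exact (ENNReal.cancel_of_ne (hvfin s')).le_tsub_of_add_le_left h1
    have hkey3 : ∀ s' ∈ T ∩ Set.Iio t, v s' + J ≤ v t := by
      intro s' hs'
      calc v s' + J ≤ v s' + (v t - v s') := by gcongr; exact hJle s' hs'
        _ = v t := add_tsub_cancel_of_le (hvmono _ _ hs'.2.le)
    rcases eq_or_ne J ⊤ with hJtop | hJtop
    · have : v t = ⊤ := by
        have := hkey3 s₀ hs₀
        rw [hJtop, add_top] at this
        exact top_le_iff.1 this
      rw [this]; exact le_top
    · have hLle : L ≤ v t - J := by
        refine Filter.limsup_le_of_le (by isBoundedDefault) ?_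
        filter_upwards [hevmem] with s hsmem
        exact (ENNReal.cancel_of_ne hJtop).le_tsub_of_add_le_right (hkey3 s hsmem)
      have hJvt : J ≤ v t := le_trans le_add_self (hkey3 s₀ hs₀)
      calc L + J ≤ (v t - J) + J := by gcongr
        _ = v t := tsub_add_cancel_of_le hJvt
end

section
/- For nonempty compact sets X, Y in a metric space M, the metric projection Pr_Y X := {y ∈ Y : ∃ x ∈ X with d(x,y) = d(x,Y)} is a nonempty compact subset of Y satisfying d_H(X, Pr_Y X) ≤ e(X,Y). -/
open Set Metric EMetric Filter
open scoped ENNReal Pointwise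

/-- The metric projection Pr_Y X of a nonempty compact X onto a nonempty compact Y
is a nonempty compact subset of Y with d_H(X, Pr_Y X) ≤ e(X,Y). -/
theorem metric_projection_properties {M : Type*} [MetricSpace M]
    (X Y : Set M) (hX : X.Nonempty) (hXc : IsCompact X)
    (hY : Y.Nonempty) (hYc : IsCompact Y) :
    ({y ∈ Y | ∃ x ∈ X, dist x y = Metric.infDist x Y}).Nonempty ∧
    IsCompact {y ∈ Y | ∃ x ∈ X, dist x y = Metric.infDist x Y} ∧
    {y ∈ Y | ∃ x ∈ X, dist x y = Metric.infDist x Y} ⊆ Y ∧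
    EMetric.hausdorffEdist X {y ∈ Y | ∃ x ∈ X, dist x y = Metric.infDist x Y} ≤ exc X Y := by
  set P := {y ∈ Y | ∃ x ∈ X, dist x y = Metric.infDist x Y} with hP
  have hedist : ∀ x y : M, dist x y = Metric.infDist x Y → edist x y = EMetric.infEdist x Y := by
    intro x y h
    rw [edist_dist, h, Metric.infDist, ENNReal.ofReal_toReal]
    · rfl
    exact Metric.infEDist_ne_top hY
  have hle : ∀ x ∈ X, EMetric.infEdist x Y ≤ exc X Y := fun x hx =>
    le_iSup₂ (f := fun x (_ : x ∈ X) => EMetric.infEdist x Y) x hx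
  have hne : P.Nonempty := by
    obtain ⟨x, hx⟩ := hX
    obtain ⟨y, hyY, hy⟩ := hYc.exists_infDist_eq_dist hY x
    exact ⟨y, hyY, x, hx, hy.symm⟩
  have hsub : P ⊆ Y := fun y hy => hy.1
  have hcomp : IsCompact P := by
    have hK : IsCompact {p : M × M | p.1 ∈ X ∧ p.2 ∈ Y ∧ dist p.1 p.2 = Metric.infDist p.1 Y} := by
      apply (hXc.prod hYc).of_isClosed_subset ?_ ?_
      · apply IsClosed.inter (hXc.isClosed.preimage continuous_fst)
        apply IsClosed.inter (hYc.isClosed.preimage continuous_snd)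
        exact isClosed_eq (continuous_fst.dist continuous_snd)
          ((Metric.continuous_infDist_pt Y).comp continuous_fst)
      · intro p hp; exact ⟨hp.1, hp.2.1⟩
    have : P = Prod.snd '' {p : M × M | p.1 ∈ X ∧ p.2 ∈ Y ∧ dist p.1 p.2 = Metric.infDist p.1 Y} := by
      ext y
      constructor
      · rintro ⟨hyY, x, hx, h⟩; exact ⟨(x, y), ⟨hx, hyY, h⟩, rfl⟩
      · rintro ⟨⟨x, y'⟩, ⟨hx, hyY, h⟩, rfl⟩; exact ⟨hyY, x, hx, h⟩
    rw [this]
    exact hK.image continuous_snd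
  refine ⟨hne, hcomp, hsub, ?_⟩
  apply EMetric.hausdorffEdist_le_of_infEdist
  · intro x hx
    obtain ⟨y, hyY, hy⟩ := hYc.exists_infDist_eq_dist hY x
    calc EMetric.infEdist x P ≤ edist x y := EMetric.infEdist_le_edist_of_mem ⟨hyY, x, hx, hy.symm⟩
    _ = EMetric.infEdist x Y := hedist x y hy.symm
    _ ≤ exc X Y := hle x hx
  · rintro y ⟨hyY, x, hx, h⟩
    calc EMetric.infEdist y X ≤ edist y x := EMetric.infEdist_le_edist_of_mem hx
    _ = edist x y := edist_comm y x
    _ = EMetric.infEdist x Y := hedist x y h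
    _ ≤ exc X Y := hle x hx
end

section
/- If T ⊆ ℝ and F : T → c(M) has bounded Jordan variation V(F,T) < +∞ with respect to the Hausdorff metric, then the image F(T) = ⋃_{t∈T} F(t) is a totally bounded subset of M. -/
open Set Metric EMetric Filter
open scoped ENNReal Pointwise

lemma aux_net {M : Type*} [MetricSpace M] (T : Set ℝ) (F : ℝ → Set M)
    (hV : varH F T < ⊤) (ε : ℝ≥0∞) (hε : 0 < ε) :
    ∃ S : Finset ℝ, ↑S ⊆ T ∧ ∀ t ∈ T, ∃ s ∈ S, hausdorffEdist (F t) (F s) ≤ ε := by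
  by_contra h
  push_neg at h
  have key : ∀ n : ℕ, ∃ S : Finset ℝ, ↑S ⊆ T ∧ S.card = n ∧
      ∀ s ∈ S, ∀ t ∈ S, s ≠ t → ε < hausdorffEdist (F s) (F t) := by
    intro n
    induction n with
    | zero => exact ⟨∅, by simp, by simp, by simp⟩
    | succ n ih =>
      obtain ⟨S, hST, hcard, hpair⟩ := ih
      obtain ⟨t, htT, ht⟩ := h S hST
      have htS : t ∉ S := by
        intro hmem
        have := ht t hmem
        rw [hausdorffEdist, hausdorffEdist_self] at this
        exact absurd this (by simpa using hε.le)
      refine ⟨insert t S, ?_, ?_, ?_⟩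
      · rw [Finset.coe_insert]
        exact Set.insert_subset htT hST
      · rw [Finset.card_insert_of_notMem htS, hcard]
      · intro a ha b hb hab
        rcases Finset.mem_insert.1 ha with ha' | ha'
        · rcases Finset.mem_insert.1 hb with hb' | hb'
          · exact absurd (ha'.trans hb'.symm) hab
          · subst ha'; exact ht b hb'
        · rcases Finset.mem_insert.1 hb with hb' | hb'
          · subst hb'; rw [hausdorffEdist, hausdorffEdist_comm]; exact ht a ha'
          · exact hpair a ha' b hb' hab
  have bound : ∀ n : ℕ, (n : ℝ≥0∞) * ε ≤ varH F T := by
    intro n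
    obtain ⟨S, hST, hcard, hpair⟩ := key (n + 1)
    obtain ⟨u, humono, huT, hterm⟩ :
        ∃ u : ℕ → ℝ, Monotone u ∧ (∀ i, u i ∈ T) ∧
          ∀ i < n, ε ≤ hausdorffEdist (F (u i)) (F (u (i + 1))) := by
      classical
      let e := S.orderIsoOfFin hcard
      refine ⟨fun i => (e ⟨min i n, Nat.lt_succ_of_le (min_le_right i n)⟩ : ℝ), ?_, ?_, ?_⟩
      · intro a b hab
        exact e.monotone (by simp only [Fin.mk_le_mk]; omega)
      · intro i
        exact hST (e _).2
      · intro i hi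
        have h1 : (⟨min i n, Nat.lt_succ_of_le (min_le_right i n)⟩ : Fin (n + 1)) =
            ⟨i, by omega⟩ := Fin.ext (min_eq_left hi.le)
        have h2 : (⟨min (i + 1) n, Nat.lt_succ_of_le (min_le_right (i + 1) n)⟩ : Fin (n + 1)) =
            ⟨i + 1, by omega⟩ := Fin.ext (min_eq_left hi)
        beta_reduce
        rw [h1, h2]
        refine (hpair _ (e _).2 _ (e _).2 ?_).le
        intro hEq
        have : (⟨i, by omega⟩ : Fin (n + 1)) = ⟨i + 1, by omega⟩ :=
          e.injective (Subtype.ext hEq)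
        simp [Fin.ext_iff] at this
    have hsum : (n : ℝ≥0∞) * ε ≤
        ∑ i ∈ Finset.range n, hausdorffEdist (F (u i)) (F (u (i + 1))) := by
      calc (n : ℝ≥0∞) * ε = ∑ _i ∈ Finset.range n, ε := by
            simp [Finset.sum_const, nsmul_eq_mul]
        _ ≤ _ := Finset.sum_le_sum fun i hi => hterm i (Finset.mem_range.1 hi)
    refine hsum.trans ?_
    unfold varH varBy
    exact le_iSup_of_le ⟨(n, u), humono, huT⟩ le_rfl
  rcases eq_or_ne ε ⊤ with rfl | hεt
  · have := bound 1
    simp at this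
    exact absurd this hV.ne
  · obtain ⟨n, hn⟩ := ENNReal.exists_nat_gt (ENNReal.div_lt_top hV.ne hε.ne').ne
    have : varH F T < (n : ℝ≥0∞) * ε :=
      (ENNReal.div_lt_iff (Or.inl hε.ne') (Or.inl hεt)).1 hn
    exact absurd (bound n) this.not_ge

/-- A compact-valued multifunction of bounded variation has totally bounded image. -/
theorem totallyBounded_image_of_bounded_variation {M : Type*} [MetricSpace M]
    (T : Set ℝ) (F : ℝ → Set M)
    (hF : ∀ t ∈ T, (F t).Nonempty ∧ IsCompact (F t))
    (hV : varH F T < ⊤) :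
    TotallyBounded (⋃ t ∈ T, F t) := by
  rw [EMetric.totallyBounded_iff]
  intro ε hε
  set δ : ℝ≥0∞ := min ε 1 with hδdef
  have hδ0 : 0 < δ := lt_min hε zero_lt_one
  have hδt : δ ≠ ⊤ := fun h => by simp [hδdef] at h
  have hδ3t : δ / 3 ≠ ⊤ := (ENNReal.div_lt_top hδt (by norm_num)).ne
  have hδ30 : 0 < δ / 3 := ENNReal.div_pos hδ0.ne' (by norm_num)
  obtain ⟨S, hST, hnet⟩ := aux_net T F hV (δ / 3) hδ30
  have hC : ∀ s : ℝ, ∃ C : Set M, C.Finite ∧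
      (s ∈ T → F s ⊆ ⋃ c ∈ C, EMetric.ball c (δ / 3)) := by
    intro s
    by_cases hs : s ∈ T
    · obtain ⟨C, hCfin, hCcov⟩ :=
        EMetric.totallyBounded_iff.1 ((hF s hs).2.totallyBounded) (δ / 3) hδ30
      exact ⟨C, hCfin, fun _ => hCcov⟩
    · exact ⟨∅, Set.finite_empty, fun h => absurd h hs⟩
  choose C hCfin hCcov using hC
  refine ⟨⋃ s ∈ (S : Set ℝ), C s, S.finite_toSet.biUnion fun s _ => hCfin s, ?_⟩
  rintro x hx
  simp only [Set.mem_iUnion] at hx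
  obtain ⟨t, htT, hxt⟩ := hx
  obtain ⟨s, hsS, hds⟩ := hnet t htT
  have hsT : s ∈ T := hST hsS
  obtain ⟨y, hyFs, hxy⟩ :=
    (hF s hsT).2.exists_infEdist_eq_edist (hF s hsT).1 x
  have hxy' : edist x y ≤ δ / 3 :=
    hxy ▸ ((infEdist_le_hausdorffEdist_of_mem hxt).trans hds)
  obtain ⟨c, hcC, hyc⟩ := by
    have := hCcov s hsT hyFs
    simpa only [Set.mem_iUnion, EMetric.mem_ball] using this
  have hxc : edist x c < δ := by
    calc edist x c ≤ edist x y + edist y c := edist_triangle x y c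
      _ < δ / 3 + δ / 3 := ENNReal.add_lt_add_of_le_of_lt (edist_ne_top x y) hxy' hyc
      _ ≤ δ / 2 + δ / 2 := add_le_add (ENNReal.div_le_div_left (by norm_num) δ)
            (ENNReal.div_le_div_left (by norm_num) δ)
      _ = δ := ENNReal.add_halves δ
  have : x ∈ EMetric.ball c ε :=
    EMetric.mem_ball.2 (hxc.trans_le (min_le_left _ _))
  exact Set.mem_iUnion₂.2 ⟨c, Set.mem_iUnion₂.2 ⟨s, hsS, hcC⟩, this⟩
end

section
/- There exists a multifunction F : [1,+∞) → c(M) into the compact subsets of the Banach space M = ℓ¹(ℕ) with V⁺(F,T) = 0 whose image ⋃_t F(t) is bounded but not totally bounded; explicitly, F(t) := {u_i : 1 ≤ i ≤ n} for n ≤ t < n+1, where u_n are the standard unit vectors of ℓ¹. Moreover V⁻(F,T) = +∞ for this F. -/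
open Set Metric EMetric Filter
open scoped ENNReal Pointwise

noncomputable def l1 : Type := lp (fun _ : ℕ => ℝ) 1

noncomputable instance : NormedAddCommGroup l1 :=
  inferInstanceAs (NormedAddCommGroup (lp (fun _ : ℕ => ℝ) 1))

noncomputable instance : MetricSpace l1 := inferInstance

/-- The n-th standard unit vector of ℓ¹. -/
noncomputable def uvec (n : ℕ) : l1 := lp.single 1 n (1 : ℝ)

/-- The example multifunction: F(t) = {u_i : 1 ≤ i, i ≤ t}, i.e. {u_1,…,u_n} for n ≤ t < n+1. -/
noncomputable def Fex (t : ℝ) : Set l1 := uvec '' {i : ℕ | 1 ≤ i ∧ (i : ℝ) ≤ t}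

lemma uvec_norm (n : ℕ) : ‖uvec n‖ = 1 := by
  have := lp.norm_single (p := 1) (E := fun _ : ℕ => ℝ) (by norm_num) n (1:ℝ)
  rw [norm_one] at this; exact this

lemma one_le_dist_uvec {m n : ℕ} (h : m ≠ n) : 1 ≤ dist (uvec m) (uvec n) := by
  set f : lp (fun _ : ℕ => ℝ) 1 :=
    lp.single 1 m (1:ℝ) - lp.single 1 n (1:ℝ) with hf
  have h1 : ‖f m‖ ≤ ‖f‖ := lp.norm_apply_le_norm one_ne_zero f m
  have h2 : f m = 1 := by
    rw [hf, lp.coeFn_sub, Pi.sub_apply, lp.single_apply_self,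
      lp.single_apply_ne (E := fun _ : ℕ => ℝ) 1 n 1 h, sub_zero]
  have h3 : dist (uvec m) (uvec n) = ‖f‖ := by rw [dist_eq_norm]; rfl
  rw [h3]
  calc (1:ℝ) = ‖f m‖ := by rw [h2]; simp
  _ ≤ _ := h1

lemma one_le_edist_uvec {m n : ℕ} (h : m ≠ n) : 1 ≤ edist (uvec m) (uvec n) := by
  rw [edist_dist]
  exact ENNReal.one_le_ofReal.2 (one_le_dist_uvec h)

lemma uvec_mem_Fex {i : ℕ} {t : ℝ} (h1 : 1 ≤ i) (h2 : (i : ℝ) ≤ t) : uvec i ∈ Fex t :=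
  ⟨i, ⟨h1, h2⟩, rfl⟩

lemma Fex_mono : Monotone Fex := by
  intro s t hst
  exact Set.image_mono (fun i hi => ⟨hi.1, hi.2.trans hst⟩)

lemma exc_eq_zero {X Y : Set l1} (h : X ⊆ Y) : exc X Y = 0 := by
  simp only [exc, ENNReal.iSup_eq_zero]
  exact fun x hx => infEdist_zero_of_mem (h hx)

/-- On T = [1,∞), F takes nonempty compact values, V⁺(F,T) = 0, the image of F is bounded
but not totally bounded, and V⁻(F,T) = +∞. -/
theorem example_varPlus_zero_image_not_totallyBounded :
    (∀ t ∈ Set.Ici (1 : ℝ), (Fex t).Nonempty ∧ IsCompact (Fex t)) ∧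
    varPlus Fex (Set.Ici 1) = 0 ∧
    Bornology.IsBounded (⋃ t ∈ Set.Ici (1 : ℝ), Fex t) ∧
    ¬ TotallyBounded (⋃ t ∈ Set.Ici (1 : ℝ), Fex t) ∧
    varMinus Fex (Set.Ici 1) = ⊤ := by
  refine ⟨?_, ?_, ?_, ?_, ?_⟩
  · -- nonempty and compact
    intro t ht
    constructor
    · exact ⟨uvec 1, uvec_mem_Fex le_rfl (by exact_mod_cast ht)⟩
    · have hfin : {i : ℕ | 1 ≤ i ∧ (i : ℝ) ≤ t}.Finite := by
        apply (Set.finite_Iic (⌊t⌋₊)).subset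
        intro i hi
        exact Nat.le_floor hi.2
      exact (hfin.image uvec).isCompact
  · -- varPlus = 0
    simp only [varPlus, varBy, ENNReal.iSup_eq_zero]
    rintro ⟨⟨n, p⟩, hmono, hmem⟩
    apply Finset.sum_eq_zero
    intro i _
    exact exc_eq_zero (Fex_mono (hmono (Nat.le_succ i)))
  · -- bounded
    apply (Metric.isBounded_closedBall (x := (0 : l1)) (r := 1)).subset
    intro x hx
    simp only [Set.mem_iUnion] at hx
    obtain ⟨t, _, i, _, rfl⟩ := hx
    simp [Metric.mem_closedBall, dist_eq_norm, uvec_norm]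
  · -- not totally bounded
    intro h
    rw [Metric.totallyBounded_iff] at h
    obtain ⟨s, hs, hcov⟩ := h (1/2) (by norm_num)
    have key : ∀ i : ℕ, ∃ y : s, uvec (i + 1) ∈ Metric.ball (y : l1) (1/2) := by
      intro i
      have hmem : uvec (i + 1) ∈ ⋃ t ∈ Set.Ici (1 : ℝ), Fex t := by
        apply Set.mem_biUnion (show ((i:ℝ)+1) ∈ Set.Ici (1:ℝ) by
          simp [le_add_iff_nonneg_left, Nat.cast_nonneg])
        exact uvec_mem_Fex (Nat.succ_le_succ (Nat.zero_le i)) (by push_cast; linarith)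
      obtain ⟨y, hy, hxy⟩ := Set.mem_iUnion₂.1 (hcov hmem)
      exact ⟨⟨y, hy⟩, hxy⟩
    choose c hc using key
    have : Finite s := hs
    obtain ⟨m, n, hmn, heq⟩ := Finite.exists_ne_map_eq_of_infinite c
    have hm := hc m
    have hn := hc n
    rw [heq] at hm
    have h1 : dist (uvec (m+1)) (uvec (n+1)) < 1 := by
      calc dist (uvec (m+1)) (uvec (n+1))
          ≤ dist (uvec (m+1)) (c n : l1) + dist (c n : l1) (uvec (n+1)) :=
            dist_triangle _ _ _
      _ < 1/2 + 1/2 := by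
            refine add_lt_add (Metric.mem_ball.1 hm) ?_
            rw [dist_comm]; exact Metric.mem_ball.1 hn
      _ = 1 := by norm_num
    exact absurd h1 (not_lt.2 (one_le_dist_uvec (by omega)))
  · -- varMinus = ⊤
    rw [eq_top_iff, ← ENNReal.iSup_natCast]
    apply iSup_le
    intro n
    simp only [varMinus, varBy]
    apply le_iSup_of_le ⟨⟨n, fun i => (i : ℝ) + 1⟩,
      fun a b hab => by simpa using hab,
      fun i => by simp [le_add_iff_nonneg_left, Nat.cast_nonneg]⟩
    have hterm : ∀ i ∈ Finset.range n, (1 : ℝ≥0∞) ≤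
        exc (Fex ((i + 1 : ℕ) + 1)) (Fex ((i : ℕ) + 1)) := by
      intro i _
      have hx : uvec (i + 2) ∈ Fex ((i + 1 : ℕ) + 1) :=
        uvec_mem_Fex (by omega) (by push_cast; linarith)
      have hd : (1 : ℝ≥0∞) ≤ infEdist (uvec (i + 2)) (Fex ((i : ℕ) + 1)) := by
        apply le_infEdist.2
        rintro y ⟨j, ⟨hj1, hj2⟩, rfl⟩
        apply one_le_edist_uvec
        intro hcontra
        rw [← hcontra] at hj2
        push_cast at hj2
        linarith
      calc (1:ℝ≥0∞) ≤ infEdist (uvec (i+2)) (Fex ((i:ℕ)+1)) := hd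
      _ ≤ exc (Fex ((i+1:ℕ)+1)) (Fex ((i:ℕ)+1)) := le_iSup₂_of_le (uvec (i+2)) hx le_rfl
    calc (n : ℝ≥0∞) = ∑ i ∈ Finset.range n, 1 := by simp
    _ ≤ _ := Finset.sum_le_sum hterm
end
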